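/- Let m(1), …, m(k) be pairwise relatively prime integers, each exceeding 1, and let m = ∏ m(i). Then the addition map ⊕ᵢ ℤ[1/m(i)] → ℤ[1/m], (a₁, …, a_k) ↦ ∑ aᵢ, is surjective, and its kernel is a free abelian group of rank k − 1. -/

import Mathlib

/-- The subgroup ℤ[1/n] of ℚ. -/
def zOneOver (n : ℕ) : AddSubgroup ℚ :=
  AddSubgroup.closure {x : ℚ | ∃ j : ℕ, x = 1 / (n : ℚ) ^ j}

/-- The set {a/n^j} as an AddSubgroup. -/
def zOneOver' (n : ℕ) : AddSubgroup ℚ where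
  carrier := {x : ℚ | ∃ (a : ℤ) (j : ℕ), x = a / (n : ℚ) ^ j}
  zero_mem' := ⟨0, 0, by simp⟩
  add_mem' := by
    rintro x y ⟨a, j, rfl⟩ ⟨b, l, rfl⟩
    rcases eq_or_ne (n : ℚ) 0 with h | h
    · rcases eq_or_ne j 0 with rfl | hj
      · rcases eq_or_ne l 0 with rfl | hl
        · exact ⟨a + b, 0, by push_cast; ring⟩
        · exact ⟨a, 0, by simp [h, zero_pow hl]⟩
      · exact ⟨b, l, by simp [h, zero_pow hj]⟩
    · refine ⟨a * n ^ l + b * n ^ j, j + l, ?_⟩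
      field_simp
      ring_nf
      simp
      ring
  neg_mem' := by
    rintro x ⟨a, j, rfl⟩
    exact ⟨-a, j, by push_cast; ring⟩

lemma mem_zOneOver (n : ℕ) (x : ℚ) :
    x ∈ zOneOver n ↔ ∃ (a : ℤ) (j : ℕ), x = a / (n : ℚ) ^ j := by
  constructor
  · intro hx
    have : zOneOver n ≤ zOneOver' n := by
      rw [zOneOver, AddSubgroup.closure_le]
      rintro y ⟨j, rfl⟩
      exact ⟨1, j, by push_cast; ring⟩
    exact this hx
  · rintro ⟨a, j, rfl⟩
    have h1 : (1 : ℚ) / (n : ℚ) ^ j ∈ zOneOver n :=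
      AddSubgroup.subset_closure ⟨j, rfl⟩
    have := AddSubgroup.zsmul_mem _ h1 a
    simpa [zsmul_eq_mul, mul_one_div, div_eq_mul_inv] using this

lemma int_mem_zOneOver (n : ℕ) (z : ℤ) : (z : ℚ) ∈ zOneOver n :=
  (mem_zOneOver n _).2 ⟨z, 0, by simp⟩

lemma zOneOver_mono {a b : ℕ} (ha : 0 < a) (hb : 0 < b) (h : a ∣ b) : zOneOver a ≤ zOneOver b := by
  intro x hx
  rw [mem_zOneOver] at hx ⊢
  obtain ⟨c, j, rfl⟩ := hx
  obtain ⟨d, rfl⟩ := h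
  refine ⟨c * d ^ j, j, ?_⟩
  have ha' : (a : ℚ) ≠ 0 := Nat.cast_ne_zero.2 ha.ne'
  have hd : d ≠ 0 := by rintro rfl; simp at hb
  have hd' : (d : ℚ) ≠ 0 := Nat.cast_ne_zero.2 hd
  push_cast
  field_simp
  ring

lemma two_frac {a b : ℕ} (ha : 0 < a) (hb : 0 < b) (hab : Nat.Coprime a b) (j : ℕ) :
    ∃ u v : ℤ, (1 : ℚ) / ((a : ℚ) * b) ^ j = u / (a : ℚ) ^ j + v / (b : ℚ) ^ j := by
  have hc : IsCoprime ((a ^ j : ℕ) : ℤ) ((b ^ j : ℕ) : ℤ) :=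
    Nat.isCoprime_iff_coprime.2 (Nat.Coprime.pow j j hab)
  obtain ⟨u, v, huv⟩ := hc
  refine ⟨v, u, ?_⟩
  have ha' : (a : ℚ) ≠ 0 := Nat.cast_ne_zero.2 ha.ne'
  have hb' : (b : ℚ) ≠ 0 := Nat.cast_ne_zero.2 hb.ne'
  have h1 : (u:ℚ) * (a:ℚ)^j + (v:ℚ) * (b:ℚ)^j = 1 := by exact_mod_cast huv
  field_simp
  rw [mul_pow]
  linear_combination (-(a:ℚ)^j * (b:ℚ)^j) * h1

lemma partial_frac {k : ℕ} (m : Fin k → ℕ) (hm : ∀ i, 0 < m i)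
    (hcop : ∀ i j, i ≠ j → Nat.Coprime (m i) (m j)) (s : Finset (Fin k)) (hs : s.Nonempty)
    (j : ℕ) :
    ∃ c : Fin k → ℤ, (1 : ℚ) / (∏ i ∈ s, (m i : ℚ)) ^ j = ∑ i ∈ s, (c i : ℚ) / (m i : ℚ) ^ j := by
  induction hs using Finset.Nonempty.cons_induction with
  | singleton a => exact ⟨fun _ => 1, by simp⟩
  | cons a t ha ht ih =>
    obtain ⟨c, hc⟩ := ih
    have hP : 0 < ∏ i ∈ t, m i := Finset.prod_pos fun i _ => hm i
    have hcop' : Nat.Coprime (m a) (∏ i ∈ t, m i) :=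
      Nat.Coprime.prod_right fun i hi => hcop a i (by rintro rfl; exact ha hi)
    obtain ⟨u, v, huv⟩ := two_frac (hm a) hP hcop' j
    refine ⟨fun i => if i = a then u else v * c i, ?_⟩
    rw [Finset.prod_cons, Finset.sum_cons]
    push_cast at huv ⊢
    rw [huv, if_pos rfl]
    congr 1
    have : ∑ i ∈ t, (if i = a then (u:ℚ) else v * c i) / (m i : ℚ) ^ j
        = ∑ i ∈ t, (v : ℚ) * (c i / (m i : ℚ) ^ j) := by
      refine Finset.sum_congr rfl fun i hi => ?_
      rw [if_neg (by rintro rfl; exact ha hi)]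
      ring
    rw [this, ← Finset.mul_sum, ← hc]
    ring

lemma den_dvd_of_mem {n : ℕ} {x : ℚ} (hx : x ∈ zOneOver n) : ∃ j : ℕ, x.den ∣ n ^ j := by
  obtain ⟨a, j, rfl⟩ := (mem_zOneOver n x).1 hx
  refine ⟨j, ?_⟩
  have h : ((a : ℚ) / ((n : ℚ) ^ j)).den = ((a : ℚ) / (((n ^ j : ℕ) : ℤ) : ℚ)).den := by
    push_cast; ring_nf
  rw [h]
  have := Rat.den_dvd a ((n ^ j : ℕ) : ℤ)
  rw [Rat.divInt_eq_div] at this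
  exact_mod_cast this

/-- for pairwise coprime integers m(1),…,m(k) > 1 with product m, the
addition map ⊕ᵢ ℤ[1/m(i)] → ℤ[1/m] is surjective with kernel free abelian of
rank k − 1. -/
theorem stmt16 (k : ℕ) (hk : 0 < k) (m : Fin k → ℕ) (hm : ∀ i, 1 < m i)
    (hcop : ∀ i j, i ≠ j → Nat.Coprime (m i) (m j))
    (φ : (∀ i, zOneOver (m i)) →+ ℚ)
    (hφ : ∀ x, φ x = ∑ i, ((x i : ℚ))) :
    φ.range = zOneOver (∏ i, m i) ∧ Nonempty (φ.ker ≃+ (Fin (k - 1) → ℤ)) := by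
  have hm0 : ∀ i, 0 < m i := fun i => Nat.zero_lt_one.trans (hm i)
  have hM : 0 < ∏ i, m i := Finset.prod_pos fun i _ => hm0 i
  have hne : Nonempty (Fin k) := Fin.pos_iff_nonempty.1 hk
  constructor
  · apply le_antisymm
    · rintro y ⟨x, rfl⟩
      rw [hφ]
      exact AddSubgroup.sum_mem _ fun i _ =>
        zOneOver_mono (hm0 i) hM (Finset.dvd_prod_of_mem m (Finset.mem_univ i)) (x i).2
    · rw [zOneOver, AddSubgroup.closure_le]
      rintro y ⟨j, rfl⟩
      obtain ⟨c, hc⟩ := partial_frac m hm0 hcop Finset.univ Finset.univ_nonempty j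
      refine ⟨fun i => ⟨(c i : ℚ) / (m i : ℚ) ^ j, (mem_zOneOver _ _).2 ⟨c i, j, rfl⟩⟩, ?_⟩
      rw [hφ]
      simp only
      rw [← hc]
      push_cast
      rfl
  · -- kernel part
    have key : ∀ x : ∀ i, zOneOver (m i), φ x = 0 → ∀ i, ((x i : ℚ)).den = 1 := by
      intro x hx i
      obtain ⟨t, ht⟩ := den_dvd_of_mem (x i).2
      set P : ℕ := ∏ l ∈ Finset.univ.erase i, m l with hP
      have hPpos : 0 < P := Finset.prod_pos fun l _ => hm0 l
      have hmemP : ((x i : ℚ)) ∈ zOneOver P := by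
        have hsum : ∑ l, ((x l : ℚ)) = 0 := by rw [← hφ x, hx]
        have heq : ((x i : ℚ)) = -∑ l ∈ Finset.univ.erase i, ((x l : ℚ)) := by
          have := Finset.sum_erase_add Finset.univ (fun l => ((x l : ℚ)))
            (Finset.mem_univ i)
          rw [hsum] at this
          linarith
        rw [heq]
        refine AddSubgroup.neg_mem _ (AddSubgroup.sum_mem _ fun l hl => ?_)
        exact zOneOver_mono (hm0 l) hPpos (Finset.dvd_prod_of_mem m hl) (x l).2
      obtain ⟨s, hs⟩ := den_dvd_of_mem hmemP
      have hcopP : Nat.Coprime (m i) P :=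
        Nat.Coprime.prod_right fun l hl =>
          hcop i l (by rintro rfl; exact (Finset.mem_erase.1 hl).1 rfl)
      have hcop2 : Nat.Coprime (m i ^ t) (P ^ s) := Nat.Coprime.pow t s hcopP
      exact Nat.eq_one_of_dvd_coprimes hcop2 ht hs
    obtain ⟨n, rfl⟩ : ∃ n, k = n + 1 := ⟨k - 1, (Nat.succ_pred_eq_of_pos hk).symm⟩
    let ψ : (Fin (n + 1) → ℤ) →+ ℤ :=
      { toFun := fun v => ∑ i, v i
        map_zero' := by simp
        map_add' := by intro v w; simp [Finset.sum_add_distrib] }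
    have hψ : ∀ v : Fin (n + 1) → ℤ, ψ v = ∑ i, v i := fun _ => rfl
    -- e1 : ψ.ker ≃+ φ.ker
    let f : ψ.ker →+ φ.ker :=
      { toFun := fun v => ⟨fun i => ⟨((v.1 i : ℚ)), int_mem_zOneOver _ _⟩, by
          rw [AddMonoidHom.mem_ker, hφ]
          have h0 : ∑ i, v.1 i = 0 := v.2
          have : ((∑ i, v.1 i : ℤ) : ℚ) = 0 := by rw [h0]; simp
          push_cast at this
          simpa using this⟩
        map_zero' := by
          apply Subtype.ext; funext i; apply Subtype.ext; simp
        map_add' := by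
          intro v w
          apply Subtype.ext; funext i; apply Subtype.ext
          push_cast
          simp }
    have hfbij : Function.Bijective f := by
      constructor
      · intro v w hvw
        apply Subtype.ext; funext i
        have h2 : ((v.1 i : ℤ) : ℚ) = ((w.1 i : ℤ) : ℚ) :=
          congrArg (fun z : φ.ker => ((z.1 i : ℚ))) hvw
        exact_mod_cast h2
      · intro x
        have hker : φ x.1 = 0 := x.2
        have hden : ∀ i, ((x.1 i : ℚ)).den = 1 := key x.1 hker
        refine ⟨⟨fun i => ((x.1 i : ℚ)).num, ?_⟩, ?_⟩
        · rw [AddMonoidHom.mem_ker, hψ]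
          have : ((∑ i, ((x.1 i : ℚ)).num : ℤ) : ℚ) = ((0 : ℤ) : ℚ) := by
            push_cast
            calc ∑ i, (((x.1 i : ℚ)).num : ℚ) = ∑ i, ((x.1 i : ℚ)) :=
                  Finset.sum_congr rfl fun i _ => (Rat.den_eq_one_iff _).1 (hden i)
              _ = 0 := by rw [← hφ x.1, hker]
          exact_mod_cast this
        · apply Subtype.ext; funext i; apply Subtype.ext
          show ((((x.1 i : ℚ)).num : ℚ)) = ((x.1 i : ℚ))
          exact (Rat.den_eq_one_iff _).1 (hden i)
    let e1 : ψ.ker ≃+ φ.ker := AddEquiv.ofBijective f hfbij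
    let e2 : ψ.ker ≃+ (Fin n → ℤ) :=
      { toFun := fun v i => v.1 i.succ
        invFun := fun w => ⟨Fin.cons (-∑ i, w i) w, by
          rw [AddMonoidHom.mem_ker, hψ, Fin.sum_univ_succ]
          simp⟩
        left_inv := by
          intro v
          apply Subtype.ext; funext i
          refine Fin.cases ?_ ?_ i
          · show (Fin.cons (-∑ l : Fin n, v.1 l.succ) (fun l => v.1 l.succ) :
              Fin (n+1) → ℤ) 0 = v.1 0
            rw [Fin.cons_zero]
            have h0 : ∑ l, v.1 l = 0 := v.2
            rw [Fin.sum_univ_succ] at h0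
            linarith
          · intro l
            show (Fin.cons (-∑ l : Fin n, v.1 l.succ) (fun l => v.1 l.succ) :
              Fin (n+1) → ℤ) l.succ = v.1 l.succ
            rw [Fin.cons_succ]
        right_inv := by
          intro w; funext i
          show (Fin.cons (-∑ l : Fin n, w l) w : Fin (n+1) → ℤ) i.succ = w i
          rw [Fin.cons_succ]
        map_add' := by intro v w; funext i; rfl }
    exact ⟨e1.symm.trans e2⟩
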